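/- Let S (the safety event) and A (the event that the sufficient verification assumption holds) be events, let M_C be a random variable with values in [0,1], and let e1, e2, e3 ≥ 0. Assume: (i) P(A ∩ Sᶜ) = 0 (sufficiency of the assumption: when A holds the system is safe, up to a null set); (ii) P(Aᶜ) > 0 and P(S | Aᶜ) ≤ e1 + e2 (the bound on the safety chance under violated assumptions, obtained from safety relevance of the model up to e1 and of the assumption up to e2); (iii) ECE(M_C, A) ≤ e3. Then ECE(M_C, S) ≤ e1 + e2 + e3. -/

import Mathlib

open MeasureTheory ProbabilityTheory
open scoped ENNReal

/-- The sigma-algebra generated by a random variable. -/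
def sigGen {Ω α : Type*} [MeasurableSpace α] (M : Ω → α) : MeasurableSpace Ω :=
  MeasurableSpace.comap M inferInstance

/-- Conditional probability of an event given a sub-sigma-algebra, as a random variable:
`P(A | 𝒢) = E[1_A | 𝒢]`. -/
noncomputable def cprob {Ω : Type*} [MeasurableSpace Ω] (μ : Measure Ω)
    (m : MeasurableSpace Ω) (A : Set Ω) : Ω → ℝ :=
  μ[A.indicator (fun _ => (1 : ℝ)) | m]


/-- Theorem 4.6 (End-to-end bound on ECE): if the assumption `A` is sufficient for safety `S`
(`P(A ∩ Sᶜ) = 0`), the safety chance under violated assumptions is bounded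
(`P(S | Aᶜ) ≤ e1 + e2`), and `ECE(M_C, A) ≤ e3`, then `ECE(M_C, S) ≤ e1 + e2 + e3`. -/
theorem ece_end_to_end_bound
    {Ω : Type*} [MeasurableSpace Ω] (μ : Measure Ω) [IsProbabilityMeasure μ]
    (S A : Set Ω) (hS : MeasurableSet S) (hA : MeasurableSet A)
    (MC : Ω → ℝ) (hMC : Measurable MC) (hMCr : ∀ ω, MC ω ∈ Set.Icc (0 : ℝ) 1)
    (e1 e2 e3 : ℝ) (he1 : 0 ≤ e1) (he2 : 0 ≤ e2) (he3 : 0 ≤ e3)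
    (hsuff : μ (A ∩ Sᶜ) = 0)
    (hAc : 0 < μ Aᶜ)
    (hrel : (ProbabilityTheory.cond μ Aᶜ S).toReal ≤ e1 + e2)
    (hECE : ∫ ω, |cprob μ (sigGen MC) A ω - MC ω| ∂μ ≤ e3) :
    ∫ ω, |cprob μ (sigGen MC) S ω - MC ω| ∂μ ≤ e1 + e2 + e3 := by
  have hiS : Integrable (S.indicator (fun _ => (1:ℝ))) μ :=
    (integrable_const 1).indicator hS
  have hiA : Integrable (A.indicator (fun _ => (1:ℝ))) μ :=
    (integrable_const 1).indicator hA
  have hif : Integrable (cprob μ (sigGen MC) S) μ := integrable_condExp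
  have hig : Integrable (cprob μ (sigGen MC) A) μ := integrable_condExp
  have hiM : Integrable MC μ := by
    refine ⟨hMC.aestronglyMeasurable, ?_⟩
    refine HasFiniteIntegral.of_bounded (C := 1) (Filter.Eventually.of_forall fun ω => ?_)
    have := hMCr ω
    rw [Real.norm_eq_abs, abs_le]
    constructor <;> linarith [this.1, this.2]
  -- step A : ∫ |f - g| ≤ e1 + e2
  have hfg : ∫ ω, |cprob μ (sigGen MC) S ω - cprob μ (sigGen MC) A ω| ∂μ ≤ e1 + e2 := by
    have hsub : cprob μ (sigGen MC) S - cprob μ (sigGen MC) A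
        =ᵐ[μ] μ[(S.indicator (fun _ => (1:ℝ))) - (A.indicator (fun _ => (1:ℝ)))|sigGen MC] :=
      (condExp_sub hiS hiA _).symm
    have h1 : ∫ ω, |cprob μ (sigGen MC) S ω - cprob μ (sigGen MC) A ω| ∂μ
        = ∫ ω, |(μ[(S.indicator (fun _ => (1:ℝ)))
            - (A.indicator (fun _ => (1:ℝ)))|sigGen MC]) ω| ∂μ := by
      refine integral_congr_ae (hsub.mono fun ω h => ?_)
      simp only [Pi.sub_apply] at h
      simp only [h]
    rw [h1]
    refine (integral_abs_condExp_le _).trans ?_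
    have hpt : ∀ ω, |(S.indicator (fun _ => (1:ℝ)) - A.indicator (fun _ => (1:ℝ))) ω|
        ≤ ((S ∩ Aᶜ).indicator (fun _ => (1:ℝ)) + (A ∩ Sᶜ).indicator (fun _ => (1:ℝ))) ω := by
      intro ω
      by_cases hs : ω ∈ S <;> by_cases ha : ω ∈ A <;>
        simp [Set.indicator, hs, ha]
    have hiSA : Integrable ((S ∩ Aᶜ).indicator (fun _ => (1:ℝ))) μ :=
      (integrable_const 1).indicator (hS.inter hA.compl)
    have hiAS : Integrable ((A ∩ Sᶜ).indicator (fun _ => (1:ℝ))) μ :=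
      (integrable_const 1).indicator (hA.inter hS.compl)
    calc ∫ ω, |(S.indicator (fun _ => (1:ℝ)) - A.indicator (fun _ => (1:ℝ))) ω| ∂μ
        ≤ ∫ ω, ((S ∩ Aᶜ).indicator (fun _ => (1:ℝ)) + (A ∩ Sᶜ).indicator (fun _ => (1:ℝ))) ω ∂μ :=
          integral_mono (hiS.sub hiA).abs (hiSA.add hiAS) hpt
      _ = (μ (S ∩ Aᶜ)).toReal + (μ (A ∩ Sᶜ)).toReal := by
          simp only [Pi.add_apply]
          rw [integral_add hiSA hiAS]
          congr 1
          · simpa [Pi.one_def, measureReal_def] using integral_indicator_one (μ := μ) (hS.inter hA.compl)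
          · simpa [Pi.one_def, measureReal_def] using integral_indicator_one (μ := μ) (hA.inter hS.compl)
      _ ≤ e1 + e2 := by
          rw [hsuff]
          simp only [ENNReal.toReal_zero, add_zero]
          have hca : (ProbabilityTheory.cond μ Aᶜ S) = (μ Aᶜ)⁻¹ * μ (Aᶜ ∩ S) :=
            cond_apply hA.compl μ S
          have hfinA : μ Aᶜ ≠ ⊤ := (measure_lt_top μ _).ne
          have hAne : μ Aᶜ ≠ 0 := hAc.ne'
          have htr : (ProbabilityTheory.cond μ Aᶜ S).toReal
              = (μ Aᶜ).toReal⁻¹ * (μ (Aᶜ ∩ S)).toReal := by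
            rw [hca, ENNReal.toReal_mul, ENNReal.toReal_inv]
          have hApos : 0 < (μ Aᶜ).toReal := ENNReal.toReal_pos hAne hfinA
          have hAle1 : (μ Aᶜ).toReal ≤ 1 := by
            simpa using ENNReal.toReal_mono ENNReal.one_ne_top (prob_le_one (μ := μ) (s := Aᶜ))
          have hkey : (μ (Aᶜ ∩ S)).toReal ≤ (e1 + e2) * (μ Aᶜ).toReal := by
            have h2 : (μ Aᶜ).toReal⁻¹ * (μ (Aᶜ ∩ S)).toReal ≤ e1 + e2 := htr ▸ hrel
            calc (μ (Aᶜ ∩ S)).toReal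
                = ((μ Aᶜ).toReal⁻¹ * (μ (Aᶜ ∩ S)).toReal) * (μ Aᶜ).toReal := by
                  field_simp
              _ ≤ (e1 + e2) * (μ Aᶜ).toReal :=
                  mul_le_mul_of_nonneg_right h2 hApos.le
          rw [Set.inter_comm]
          refine hkey.trans ?_
          nlinarith
  calc ∫ ω, |cprob μ (sigGen MC) S ω - MC ω| ∂μ
      ≤ ∫ ω, (|cprob μ (sigGen MC) S ω - cprob μ (sigGen MC) A ω|
          + |cprob μ (sigGen MC) A ω - MC ω|) ∂μ := by
        refine integral_mono (hif.sub hiM).abs ((hif.sub hig).abs.add (hig.sub hiM).abs)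
          fun ω => ?_
        have h3 : cprob μ (sigGen MC) S ω - MC ω
            = (cprob μ (sigGen MC) S ω - cprob μ (sigGen MC) A ω)
              + (cprob μ (sigGen MC) A ω - MC ω) := by ring
        simp only [Pi.add_apply]
        rw [h3]; exact abs_add_le _ _
    _ = (∫ ω, |cprob μ (sigGen MC) S ω - cprob μ (sigGen MC) A ω| ∂μ)
        + ∫ ω, |cprob μ (sigGen MC) A ω - MC ω| ∂μ :=
        integral_add (hif.sub hig).abs (hig.sub hiM).abs
    _ ≤ (e1 + e2) + e3 := add_le_add hfg hECE
    _ = e1 + e2 + e3 := by ring
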